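/- For every Boolean function f : F_2^n → F_2 and every integer k ≥ 1, C_min[f^{∘k}] ≥ C_min[f]^k, where f^{∘k} denotes the k-fold composition power of f. -/

import Mathlib

open Finset

namespace Paper

/-- `f` is constant on the set `S`. -/
def ConstOn {n : ℕ} (f : (Fin n → ZMod 2) → ZMod 2) (S : Set (Fin n → ZMod 2)) : Prop :=
  ∃ c, ∀ y ∈ S, f y = c

/-- The subcube of points agreeing with `x` on the coordinates in `J`. -/
def cube {n : ℕ} (J : Finset (Fin n)) (x : Fin n → ZMod 2) : Set (Fin n → ZMod 2) :=
  {y | ∀ i ∈ J, y i = x i}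

/-- Certificate complexity of `f` at `x`. -/
noncomputable def C {n : ℕ} (f : (Fin n → ZMod 2) → ZMod 2) (x : Fin n → ZMod 2) : ℕ :=
  sInf {d | ∃ J : Finset (Fin n), J.card = d ∧ ConstOn f (cube J x)}

/-- Minimum certificate complexity of `f`. -/
noncomputable def Cmin {n : ℕ} (f : (Fin n → ZMod 2) → ZMod 2) : ℕ :=
  ⨅ x, C f x

/-- The affine subspace cut out by the parity constraints `⟨α j, ·⟩ = b j`. -/
def affSol {n : ℕ} (d : ℕ) (α : Fin d → Fin n → ZMod 2) (b : Fin d → ZMod 2) :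
    Set (Fin n → ZMod 2) :=
  {y | ∀ j, ∑ i, α j i * y i = b j}

/-- Parity certificate complexity of `f` at `x`. -/
noncomputable def pC {n : ℕ} (f : (Fin n → ZMod 2) → ZMod 2) (x : Fin n → ZMod 2) : ℕ :=
  sInf {d | ∃ (α : Fin d → Fin n → ZMod 2) (b : Fin d → ZMod 2),
    x ∈ affSol d α b ∧ ConstOn f (affSol d α b)}

/-- Minimum parity certificate complexity (parity kill number). -/
noncomputable def pCmin {n : ℕ} (f : (Fin n → ZMod 2) → ZMod 2) : ℕ := ⨅ x, pC f x

/-- Maximum parity certificate complexity. -/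
noncomputable def pCmax {n : ℕ} (f : (Fin n → ZMod 2) → ZMod 2) : ℕ := ⨆ x, pC f x

/-- Block composition `f ∘ g`. -/
def compose {n m : ℕ} (f : (Fin n → ZMod 2) → ZMod 2) (g : (Fin m → ZMod 2) → ZMod 2) :
    (Fin (m * n) → ZMod 2) → ZMod 2 :=
  fun y => f fun i => g fun j => y (finProdFinEquiv (j, i))

/-- The `k`-fold composition power of `f` (`power f k` agrees with `f^{∘k}` for `k ≥ 1`). -/
def power {n : ℕ} (f : (Fin n → ZMod 2) → ZMod 2) : (k : ℕ) → (Fin (n ^ k) → ZMod 2) → ZMod 2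
  | 0 => fun x => x (Fin.cast (pow_zero n).symm 0)
  | k + 1 => fun x => f fun i => power f k fun j =>
      x (Fin.cast (pow_succ n k).symm (finProdFinEquiv (j, i)))

/-- `f` is an affine function `x ↦ b ⊕ ⟨x, α⟩`. -/
def IsAffine {n : ℕ} (f : (Fin n → ZMod 2) → ZMod 2) : Prop :=
  ∃ (b : ZMod 2) (α : Fin n → ZMod 2), ∀ x, f x = b + ∑ i, α i * x i

/-- Parity decision trees on `n` input bits. -/
inductive PDT (n : ℕ) : Type
  | leaf : ZMod 2 → PDT n
  | node : (Fin n → ZMod 2) → PDT n → PDT n → PDT n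

/-- Evaluation of a parity decision tree. -/
def PDT.eval {n : ℕ} : PDT n → (Fin n → ZMod 2) → ZMod 2
  | .leaf b, _ => b
  | .node α t0 t1, x => if ∑ i, α i * x i = 0 then t0.eval x else t1.eval x

/-- Depth of a parity decision tree. -/
def PDT.depth {n : ℕ} : PDT n → ℕ
  | .leaf _ => 0
  | .node _ t0 t1 => max t0.depth t1.depth + 1

/-- Parity decision tree complexity of `f`. -/
noncomputable def DTp {n : ℕ} (f : (Fin n → ZMod 2) → ZMod 2) : ℕ :=
  sInf {d | ∃ T : PDT n, T.depth ≤ d ∧ ∀ x, T.eval x = f x}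

/-- Identify a bit with an element of `{-1, 1} ⊆ ℝ`. -/
noncomputable def toPM (b : Bool) : ℝ := if b then -1 else 1

/-- The Fourier coefficient `f̂(S)` of `f : {-1,1}^n → ℝ`. -/
noncomputable def fourier {n : ℕ} (f : (Fin n → Bool) → ℝ) (S : Finset (Fin n)) : ℝ :=
  (∑ x : Fin n → Bool, f x * ∏ i ∈ S, toPM (x i)) / 2 ^ n

open Classical in
/-- The Sort function as a real-valued function on `{-1,1}^4`. -/
noncomputable def sortR (x : Fin 4 → ℝ) : ℝ :=
  if (x 0 ≥ x 1 ∧ x 1 ≥ x 2 ∧ x 2 ≥ x 3) ∨ (x 0 ≤ x 1 ∧ x 1 ≤ x 2 ∧ x 2 ≤ x 3) then 1 else -1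

/-- The Sort function over `F_2` (ordering `0 < 1`). -/
def sortF (x : Fin 4 → ZMod 2) : ZMod 2 :=
  if ((x 1).val ≤ (x 0).val ∧ (x 2).val ≤ (x 1).val ∧ (x 3).val ≤ (x 2).val) ∨
     ((x 0).val ≤ (x 1).val ∧ (x 1).val ≤ (x 2).val ∧ (x 2).val ≤ (x 3).val) then 1 else 0

lemma cmin_le_C {n : ℕ} (f : (Fin n → ZMod 2) → ZMod 2) (x : Fin n → ZMod 2) :
    Cmin f ≤ C f x :=
  ciInf_le (OrderBot.bddBelow _) x

lemma C_le_card {n : ℕ} (f : (Fin n → ZMod 2) → ZMod 2) (x : Fin n → ZMod 2)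
    (J : Finset (Fin n)) (h : ConstOn f (cube J x)) : C f x ≤ J.card :=
  Nat.sInf_le ⟨J, rfl, h⟩

lemma constOn_cube_univ {n : ℕ} (f : (Fin n → ZMod 2) → ZMod 2) (x : Fin n → ZMod 2) :
    ConstOn f (cube Finset.univ x) := by
  refine ⟨f x, fun y hy => ?_⟩
  have : y = x := funext fun i => hy i (Finset.mem_univ i)
  rw [this]

lemma key {n m M : ℕ} (f : (Fin n → ZMod 2) → ZMod 2) (g : (Fin m → ZMod 2) → ZMod 2)
    (ee : Fin m × Fin n ≃ Fin M) :
    Cmin f * Cmin g ≤ Cmin (fun x => f fun i => g fun j => x (ee (j, i))) := by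
  classical
  set F : (Fin M → ZMod 2) → ZMod 2 := fun x => f fun i => g fun j => x (ee (j, i)) with hF
  refine le_ciInf fun x => ?_
  refine le_csInf ⟨Finset.univ.card, Finset.univ, rfl, constOn_cube_univ F x⟩ ?_
  rintro d ⟨J, rfl, c0, hc0⟩
  set xi : Fin n → Fin m → ZMod 2 := fun i j => x (ee (j, i)) with hxi
  set Ji : Fin n → Finset (Fin m) := fun i => Finset.univ.filter (fun j => ee (j, i) ∈ J) with hJi
  set z : Fin n → ZMod 2 := fun i => g (xi i) with hz
  set I : Finset (Fin n) := Finset.univ.filter (fun i => Cmin g ≤ (Ji i).card) with hI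
  -- Claim A: for cheap blocks, g achieves any value on the block subcube
  have claimA : ∀ i ∉ I, ∀ c : ZMod 2,
      ∃ y : Fin m → ZMod 2, (∀ j ∈ Ji i, y j = xi i j) ∧ g y = c := by
    intro i hi c
    by_contra h
    push_neg at h
    have hconst : ConstOn g (cube (Ji i) (xi i)) := by
      refine ⟨c + 1, fun y hy => ?_⟩
      have h2 := h y hy
      have key2 : ∀ a c : ZMod 2, a ≠ c → a = c + 1 := by decide
      exact key2 _ _ h2
    have h1 : Cmin g ≤ (Ji i).card :=
      le_trans (cmin_le_C g (xi i)) (C_le_card g (xi i) _ hconst)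
    simp only [hI, Finset.mem_filter, Finset.mem_univ, true_and] at hi
    exact hi h1
  -- Claim B: f is constant on the cube of expensive blocks
  have claimB : ConstOn f (cube I z) := by
    refine ⟨c0, fun w hw => ?_⟩
    choose Y hY1 hY2 using fun (i : {i : Fin n // i ∉ I}) => claimA i i.2 (w i)
    set y : Fin M → ZMod 2 := fun t =>
      if h : (ee.symm t).2 ∈ I then x t else Y ⟨(ee.symm t).2, h⟩ (ee.symm t).1 with hy
    have hee : ∀ t : Fin M, ee ((ee.symm t).1, (ee.symm t).2) = t := by
      intro t; simpa using ee.apply_symm_apply t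
    have hy_mem : y ∈ cube J x := by
      intro t ht
      by_cases h : (ee.symm t).2 ∈ I
      · simp [hy, h]
      · have hj : (ee.symm t).1 ∈ Ji (ee.symm t).2 := by
          simp only [hJi, Finset.mem_filter, Finset.mem_univ, true_and]
          rw [hee t]; exact ht
        simp only [hy, dif_neg h]
        rw [hY1 ⟨_, h⟩ _ hj]
        simp only [hxi]
        rw [hee t]
    have hinner : (fun i => g fun j => y (ee (j, i))) = w := by
      funext i
      by_cases h : i ∈ I
      · have hx : (fun j => y (ee (j, i))) = xi i := by
          funext j
          simp [hy, Equiv.symm_apply_apply, h, hxi]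
        rw [hx]
        exact (hw i h).symm
      · have hx : (fun j => y (ee (j, i))) = Y ⟨i, h⟩ := by
          funext j
          simp [hy, Equiv.symm_apply_apply, h]
        rw [hx]
        exact hY2 ⟨i, h⟩
    have := hc0 y hy_mem
    simp only [hF] at this
    rwa [hinner] at this
  have hIf : Cmin f ≤ I.card :=
    le_trans (cmin_le_C f z) (C_le_card f z _ claimB)
  have hsum : I.card * Cmin g ≤ J.card := by
    have h1 : ∀ i ∈ I, Cmin g ≤ (Ji i).card := by
      intro i hi
      simpa only [hI, Finset.mem_filter, Finset.mem_univ, true_and] using hi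
    have hinj : ∀ i : Fin n, Function.Injective (fun j : Fin m => ee (j, i)) := by
      intro i a b hab
      have := ee.injective hab
      exact (Prod.mk.injEq _ _ _ _).mp this |>.1
    calc I.card * Cmin g = ∑ _i ∈ I, Cmin g := by simp [mul_comm]
      _ ≤ ∑ i ∈ I, (Ji i).card := Finset.sum_le_sum h1
      _ = ∑ i ∈ I, ((Ji i).image (fun j => ee (j, i))).card := by
          refine Finset.sum_congr rfl fun i _ => ?_
          rw [Finset.card_image_of_injective _ (hinj i)]
      _ = (I.biUnion (fun i => (Ji i).image (fun j => ee (j, i)))).card := by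
          rw [Finset.card_biUnion]
          intro a ha b hb hab
          rw [Function.onFun, Finset.disjoint_left]
          rintro t hta htb
          simp only [Finset.mem_image] at hta htb
          obtain ⟨ja, -, hja⟩ := hta
          obtain ⟨jb, -, hjb⟩ := htb
          apply hab
          have := ee.injective (hja.trans hjb.symm)
          exact ((Prod.mk.injEq _ _ _ _).mp this).2
      _ ≤ J.card := by
          apply Finset.card_le_card
          intro t ht
          simp only [Finset.mem_biUnion, Finset.mem_image] at ht
          obtain ⟨i, -, j, hj, rfl⟩ := ht
          simpa only [hJi, Finset.mem_filter, Finset.mem_univ, true_and] using hj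
  calc Cmin f * Cmin g ≤ I.card * Cmin g := Nat.mul_le_mul_right _ hIf
    _ ≤ J.card := hsum

lemma stmt3_aux {n : ℕ} (f : (Fin n → ZMod 2) → ZMod 2) (k : ℕ) :
    Cmin f ^ k ≤ Cmin (power f k) := by
  induction k with
  | zero =>
    simp only [pow_zero]
    refine le_ciInf fun x => ?_
    by_contra h
    push_neg at h
    have h0 : C (power f 0) x = 0 := Nat.lt_one_iff.mp h
    have hne : {d | ∃ J : Finset (Fin (n ^ 0)), J.card = d ∧
        ConstOn (power f 0) (cube J x)}.Nonempty :=
      ⟨Finset.univ.card, Finset.univ, rfl, constOn_cube_univ _ x⟩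
    have h0' := Nat.sInf_eq_zero.mp h0
    rcases h0' with h0' | h0'
    · obtain ⟨J, hJ, c, hc⟩ := h0'
      have hJe : J = ∅ := Finset.card_eq_zero.mp hJ
      subst hJe
      have h1 : power f 0 (fun _ => 0) = c := hc _ (by intro i hi; exact (Finset.notMem_empty i hi).elim)
      have h2 : power f 0 (fun _ => 1) = c := hc _ (by intro i hi; exact (Finset.notMem_empty i hi).elim)
      simp only [power] at h1 h2
      rw [← h2] at h1
      exact one_ne_zero h1.symm
    · exact (Set.not_nonempty_iff_eq_empty.mpr h0') hne
  | succ k ih =>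
    have hkey := key f (power f k) (finProdFinEquiv.trans (finCongr (pow_succ n k).symm))
    calc Cmin f ^ (k + 1) = Cmin f * Cmin f ^ k := by ring
      _ ≤ Cmin f * Cmin (power f k) := Nat.mul_le_mul_left _ ih
      _ ≤ Cmin (power f (k + 1)) := hkey

/-- `Cmin` is supermultiplicative under composition powers. -/
theorem stmt3 {n : ℕ} (f : (Fin n → ZMod 2) → ZMod 2) (k : ℕ) (hk : 1 ≤ k) :
    Cmin f ^ k ≤ Cmin (power f k) :=
  stmt3_aux f k

end Paper
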